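/- Under the hypotheses of the error-locator proposition, the linear system Σⱼ aⱼ [r, fⱼ gᵢ] = 0 (for 1 ≤ i ≤ k) has a nontrivial solution (a₁,...,a_ℓ). -/
import Mathlib


/-- Existence of a nontrivial solution to the syndrome equations: since some
nonzero `z ∈ L(G')` vanishes at all error positions, the linear system
`∑ⱼ aⱼ [r, fⱼ gᵢ] = 0` has a nontrivial solution. -/
theorem syndrome_system_nontrivial_solution (F : Type) [Field F] [Fintype F]
    (n ℓ k : ℕ) (f : Fin ℓ → (Fin n → F)) (g : Fin k → (Fin n → F))
    (LG : Submodule F (Fin n → F))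
    (hfli : LinearIndependent F f)
    (hprod : ∀ (j : Fin ℓ) (i : Fin k), (fun v => f j v * g i v) ∈ LG)
    (c e : Fin n → F)
    (hc : ∀ h ∈ LG, ∑ v, c v * h v = 0)
    (hz : ∃ γ : Fin ℓ → F, (fun v => ∑ j, γ j * f j v) ≠ 0 ∧
      ∀ i, e i ≠ 0 → (∑ j, γ j * f j i) = 0) :
    ∃ a : Fin ℓ → F, a ≠ 0 ∧
      ∀ i : Fin k, ∑ j, a j * (∑ v, (c v + e v) * (f j v * g i v)) = 0 := by
  obtain ⟨γ, hzne, hzero⟩ := hz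
  refine ⟨γ, ?_, ?_⟩
  · rintro rfl
    apply hzne
    funext v
    simp
  · intro i
    have key : ∀ j, ∑ v, c v * (f j v * g i v) = 0 := fun j => hc _ (hprod j i)
    calc ∑ j, γ j * (∑ v, (c v + e v) * (f j v * g i v))
        = ∑ j, ∑ v, γ j * ((c v + e v) * (f j v * g i v)) := by
          simp [Finset.mul_sum]
      _ = ∑ v, ∑ j, γ j * ((c v + e v) * (f j v * g i v)) := Finset.sum_comm
      _ = ∑ v, ((∑ j, c v * (γ j * (f j v * g i v))) + (e v * (∑ j, γ j * f j v)) * g i v) := by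
          refine Finset.sum_congr rfl fun v _ => ?_
          simp only [Finset.mul_sum, Finset.sum_mul, ← Finset.sum_add_distrib]
          refine Finset.sum_congr rfl fun j _ => by ring
      _ = ∑ v, ∑ j, c v * (γ j * (f j v * g i v)) := by
          refine Finset.sum_congr rfl fun v _ => ?_
          rcases eq_or_ne (e v) 0 with h | h
          · simp [h]
          · simp [hzero v h]
      _ = ∑ j, γ j * ∑ v, c v * (f j v * g i v) := by
          rw [Finset.sum_comm]
          refine Finset.sum_congr rfl fun j _ => ?_
          rw [Finset.mul_sum]
          refine Finset.sum_congr rfl fun v _ => by ring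
      _ = 0 := by simp [key]
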